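/- arXiv:2104.07273 — 3 statements merged into one kernel-verified Lean document; each statement's English description precedes it below -/
import Mathlib

section
/- For two compositions α, β ∈ C(s,n), the earth mover's distance between α and β equals the cardinality of the symmetric difference of their associated Young diagrams (viewed as subsets of the s × (n-1) grid). -/
/-- The word of a composition `α = (α 0, …, α (n-1))`: the weakly increasing list
containing each value `i ∈ {0,…,n-1}` with multiplicity `α i`. -/
def word (n : ℕ) (α : ℕ → ℕ) : List ℕ :=
  ((Finset.range n).sum fun i => Multiset.replicate (α i) i).sort (· ≤ ·)

/-- The earth mover's distance between two compositions of `s`: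
`∑_{j=1}^s |w(α)_j - w(β)_j|` (equivalently, the minimal cost of a transport plan). -/
def emd (s n : ℕ) (α β : ℕ → ℕ) : ℕ :=
  ∑ j ∈ Finset.range s, (((word n α).getD j 0 : ℤ) - ((word n β).getD j 0 : ℤ)).natAbs

/-- The Young diagram of a composition, as a subset of the `s × (n-1)` grid:
the cell `(j, c)` (0-based) lies in the diagram iff `c < w(α)_j`. -/
def diagram (s n : ℕ) (α : ℕ → ℕ) : Finset (ℕ × ℕ) :=
  (Finset.range s ×ˢ Finset.range (n - 1)).filter fun p => p.2 < (word n α).getD p.1 0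

lemma word_length (n : ℕ) (α : ℕ → ℕ) :
    (word n α).length = ∑ i ∈ Finset.range n, α i := by
  simp [word]

lemma word_lt {n : ℕ} {α : ℕ → ℕ} {x : ℕ} (hx : x ∈ word n α) : x < n := by
  rw [word, Multiset.mem_sort, Multiset.mem_sum] at hx
  obtain ⟨i, hi, hxi⟩ := hx
  rw [Multiset.eq_of_mem_replicate hxi]
  exact Finset.mem_range.mp hi

lemma word_getD_le {n s : ℕ} {α : ℕ → ℕ} (hα : ∑ i ∈ Finset.range n, α i = s)
    {j : ℕ} (hj : j < s) : (word n α).getD j 0 ≤ n - 1 := by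
  have hlen : (word n α).length = s := (word_length n α).trans hα
  have hmem : (word n α).getD j 0 ∈ word n α := by
    rw [List.getD_eq_getElem _ _ (by omega)]
    exact List.getElem_mem _
  have := word_lt hmem
  omega

/-- The earth mover's distance between two compositions `α, β ∈ C(s,n)` equals the
cardinality of the symmetric difference of their Young diagrams. -/
theorem emd_eq_card_symmDiff (s n : ℕ) (α β : ℕ → ℕ)
    (hα : ∑ i ∈ Finset.range n, α i = s) (hβ : ∑ i ∈ Finset.range n, β i = s) :
    emd s n α β = (symmDiff (diagram s n α) (diagram s n β)).card := by
  have hsd : symmDiff (diagram s n α) (diagram s n β)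
      = (Finset.range s ×ˢ Finset.range (n - 1)).filter
          (fun p => ¬((p.2 < (word n α).getD p.1 0) ↔ (p.2 < (word n β).getD p.1 0))) := by
    ext p
    simp only [symmDiff_def, Finset.sup_eq_union, Finset.mem_union, Finset.mem_sdiff,
      diagram, Finset.mem_filter]
    tauto
  rw [hsd, Finset.card_filter, Finset.sum_product]
  unfold emd
  refine Finset.sum_congr rfl fun j hj => ?_
  rw [Finset.mem_range] at hj
  have ha := word_getD_le hα hj
  have hb := word_getD_le hβ hj
  set a := (word n α).getD j 0 with hadef
  set b := (word n β).getD j 0 with hbdef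
  rw [← Finset.card_filter]
  have hset : (Finset.range (n - 1)).filter (fun c => ¬((c < a) ↔ (c < b)))
      = Finset.Ico (min a b) (max a b) := by
    ext c
    simp only [Finset.mem_filter, Finset.mem_range, Finset.mem_Ico]
    omega
  rw [hset, Nat.card_Ico]
  omega
end

section
/- For compositions α_1,...,α_d ∈ C(s,n), the earth mover's coefficient EMC(α_1,...,α_d) = Σ_{j=1}^s C(w(α_1)_j, ..., w(α_d)_j), where C(x) is the taxicab distance from x to the diagonal, equals the unimodal symmetric difference ▲(α_1,...,α_d) of their Young diagrams. -/
/-- `cost d x`: the taxicab distance from `(x 0, …, x (d-1))` to the diagonal,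
i.e. the minimum over `t : ℤ` of `∑ i, |x i - t|`. -/
noncomputable def cost (d : ℕ) (x : ℕ → ℤ) : ℕ :=
  sInf {c : ℕ | ∃ t : ℤ, (c : ℤ) = ∑ i ∈ Finset.range d, |x i - t|}

/-- The earth mover's coefficient of `d` compositions:
`∑_{j=1}^s C(w(α_1)_j, …, w(α_d)_j)`. -/
noncomputable def emc (s n d : ℕ) (α : ℕ → ℕ → ℕ) : ℕ :=
  ∑ j ∈ Finset.range s, cost d fun i => ((word n (α i)).getD j 0 : ℤ)

/-- The unimodal symmetric difference
`▲(A 0, …, A (d-1)) = ∑_{k=1}^{d-1} min(k, d-k) · #{elements in exactly k of the A_i}`. -/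
def usd {γ : Type} [DecidableEq γ] (d : ℕ) (A : ℕ → Finset γ) : ℕ :=
  ∑ k ∈ Finset.range (d - 1),
    min (k + 1) (d - (k + 1)) *
      (((Finset.range d).biUnion A).filter
        (fun x => ((Finset.range d).filter (fun i => x ∈ A i)).card = k + 1)).card

section Aux
open Finset

/-- number of indices `i < d` with `c < x i`. -/
def Kc (d : ℕ) (x : ℕ → ℕ) (c : ℕ) : ℕ := ((range d).filter fun i => c < x i).card

lemma Kc_le (d : ℕ) (x : ℕ → ℕ) (c : ℕ) : Kc d x c ≤ d := by
  simpa [Kc] using (Finset.card_filter_le (range d) _)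

lemma Kc_anti (d : ℕ) (x : ℕ → ℕ) {c c' : ℕ} (h : c ≤ c') : Kc d x c' ≤ Kc d x c := by
  apply Finset.card_le_card
  exact Finset.monotone_filter_right _ (fun i _ hi => lt_of_le_of_lt h hi)

lemma abs_sub_card (m a b : ℕ) (ha : a ≤ m) (hb : b ≤ m) :
    |(a : ℤ) - b| = (((range m).filter fun c => ¬((c < a) ↔ (c < b))).card : ℤ) := by
  have : ((range m).filter fun c => ¬((c < a) ↔ (c < b))) = Finset.Ico (min a b) (max a b) := by
    ext c; simp only [mem_filter, mem_range, Finset.mem_Ico]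
    omega
  rw [this, Nat.card_Ico]
  rcases le_total a b with h | h
  · rw [abs_of_nonpos (by omega), min_eq_left h, max_eq_right h]; omega
  · rw [abs_of_nonneg (by omega), min_eq_right h, max_eq_left h]; omega

lemma sum_abs_eq (d m : ℕ) (x : ℕ → ℕ) (hx : ∀ i, i < d → x i ≤ m) (t : ℕ) (ht : t ≤ m) :
    ∑ i ∈ range d, |(x i : ℤ) - t| =
      ∑ c ∈ range m, ((if c < t then d - Kc d x c else Kc d x c : ℕ) : ℤ) := by
  classical
  have h1 : ∀ i ∈ range d, |(x i : ℤ) - t| =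
      (((range m).filter fun c => ¬((c < x i) ↔ (c < t))).card : ℤ) := by
    intro i hi
    exact abs_sub_card m (x i) t (hx i (mem_range.mp hi)) ht
  rw [Finset.sum_congr rfl h1]
  have h2 : ∀ c ∈ range m,
      (((range d).filter fun i => ¬((c < x i) ↔ (c < t))).card : ℤ) =
      ((if c < t then d - Kc d x c else Kc d x c : ℕ) : ℤ) := by
    intro c _
    congr 1
    by_cases hct : c < t
    · rw [if_pos hct]
      have : ((range d).filter fun i => ¬((c < x i) ↔ (c < t))) =
          ((range d).filter fun i => ¬ (c < x i)) := by
        apply Finset.filter_congr; intro i _; simp [hct]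
      rw [this, Finset.filter_not, Finset.card_sdiff_of_subset (Finset.filter_subset _ _), card_range]
      rfl
    · rw [if_neg hct]
      have : ((range d).filter fun i => ¬((c < x i) ↔ (c < t))) =
          ((range d).filter fun i => c < x i) := by
        apply Finset.filter_congr; intro i _; simp [hct]
      rw [this]; rfl
  rw [← Finset.sum_congr rfl h2]
  push_cast [Finset.card_filter]
  rw [Finset.sum_comm]

lemma filter_downward (m : ℕ) (p : ℕ → Prop) [DecidablePred p]
    (hp : ∀ a b : ℕ, a ≤ b → p b → p a) :
    (range m).filter p = range ((range m).filter p).card := by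
  apply Finset.eq_of_subset_of_card_le
  · intro a ha
    rw [mem_range]
    have hsub : range (a + 1) ⊆ (range m).filter p := by
      intro b hb
      rw [mem_range] at hb
      rw [mem_filter] at ha ⊢
      exact ⟨mem_range.mpr (lt_of_le_of_lt (by omega) (mem_range.mp ha.1)),
        hp b a (by omega) ha.2⟩
    calc a < a + 1 := by omega
    _ = (range (a+1)).card := (card_range _).symm
    _ ≤ _ := Finset.card_le_card hsub
  · rw [card_range]

lemma cost_eq (d m : ℕ) (x : ℕ → ℕ) (hx : ∀ i, i < d → x i ≤ m) :
    cost d (fun i => (x i : ℤ)) = ∑ c ∈ range m, min (Kc d x c) (d - Kc d x c) := by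
  classical
  set T : ℕ := ∑ c ∈ range m, min (Kc d x c) (d - Kc d x c) with hT
  set t₀ : ℕ := ((range m).filter fun c => d < 2 * Kc d x c).card with ht₀
  have ht₀m : t₀ ≤ m := by
    rw [ht₀]
    calc ((range m).filter fun c => d < 2 * Kc d x c).card ≤ (range m).card :=
      Finset.card_filter_le _ _
    _ = m := card_range m
  have hdc : (range m).filter (fun c => d < 2 * Kc d x c) = range t₀ :=
    filter_downward m _ (fun a b hab hb => lt_of_lt_of_le hb (by
      have := Kc_anti d x hab; omega))
  have key : ∀ t : ℕ, t ≤ m →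
      (T = ∑ c ∈ range m, (if c < t then d - Kc d x c else Kc d x c)) ∨
      (T ≤ ∑ c ∈ range m, (if c < t then d - Kc d x c else Kc d x c)) := by
    intro t _; right
    rw [hT]
    apply Finset.sum_le_sum
    intro c _
    by_cases h : c < t
    · rw [if_pos h]; exact min_le_right _ _
    · rw [if_neg h]; exact min_le_left _ _
  -- the value T is attained at t₀
  have hnat : T = ∑ c ∈ range m, (if c < t₀ then d - Kc d x c else Kc d x c) := by
    rw [hT]
    apply Finset.sum_congr rfl
    intro c hc
    have hKd := Kc_le d x c
    by_cases h : c < t₀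
    · have hm : c ∈ (range m).filter (fun c => d < 2 * Kc d x c) := by
        rw [hdc, mem_range]; exact h
      rw [mem_filter] at hm
      rw [if_pos h]
      omega
    · have hm : c ∉ (range m).filter (fun c => d < 2 * Kc d x c) := by
        rw [hdc, mem_range]; exact h
      rw [mem_filter] at hm
      push_neg at hm
      have h2 := hm hc
      rw [if_neg h]
      omega
  have hmem : (T : ℤ) = ∑ i ∈ range d, |(x i : ℤ) - (t₀ : ℤ)| := by
    rw [sum_abs_eq d m x hx t₀ ht₀m, hnat, Nat.cast_sum]
  -- lower bound
  have hlb : ∀ y ∈ {c : ℕ | ∃ t : ℤ, (c : ℤ) = ∑ i ∈ range d, |(x i : ℤ) - t|}, T ≤ y := by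
    rintro y ⟨t, hy⟩
    set t' : ℕ := min t.toNat m with ht'
    have ht'm : t' ≤ m := min_le_right _ _
    have step : ∑ i ∈ range d, |(x i : ℤ) - (t' : ℤ)| ≤ ∑ i ∈ range d, |(x i : ℤ) - t| := by
      apply Finset.sum_le_sum
      intro i hi
      have hxi : x i ≤ m := hx i (mem_range.mp hi)
      have htn : (t' : ℤ) = max 0 (min t (m : ℤ)) := by
        rw [ht']; omega
      rcases abs_cases ((x i : ℤ) - t) with ⟨h1, h2⟩ | ⟨h1, h2⟩ <;>
        rcases abs_cases ((x i : ℤ) - (t' : ℤ)) with ⟨h3, h4⟩ | ⟨h3, h4⟩ <;>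
        omega
    have hTle' : T ≤ ∑ c ∈ range m, (if c < t' then d - Kc d x c else Kc d x c) := by
      rw [hT]
      apply Finset.sum_le_sum
      intro c _
      by_cases h : c < t'
      · rw [if_pos h]; exact min_le_right _ _
      · rw [if_neg h]; exact min_le_left _ _
    have hTle : (T : ℤ) ≤ ∑ i ∈ range d, |(x i : ℤ) - (t' : ℤ)| := by
      rw [sum_abs_eq d m x hx t' ht'm, ← Nat.cast_sum]
      exact_mod_cast hTle'
    have : (T : ℤ) ≤ (y : ℤ) := by rw [hy]; exact le_trans hTle step
    exact_mod_cast this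
  have hmem' : T ∈ {c : ℕ | ∃ t : ℤ, (c : ℤ) = ∑ i ∈ range d, |(x i : ℤ) - t|} :=
    ⟨(t₀ : ℤ), hmem⟩
  unfold cost
  exact le_antisymm (Nat.sInf_le hmem') (le_csInf ⟨T, hmem'⟩ hlb)

lemma sum_min_group (d m : ℕ) (K : ℕ → ℕ) (hK : ∀ c, K c ≤ d) :
    ∑ c ∈ range m, min (K c) (d - K c) =
      ∑ k ∈ range (d - 1),
        min (k + 1) (d - (k + 1)) * ((range m).filter fun c => K c = k + 1).card := by
  classical
  have h1 : ∑ c ∈ range m, min (K c) (d - K c) =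
      ∑ v ∈ range (d + 1), ∑ c ∈ (range m).filter fun c => K c = v, min (K c) (d - K c) := by
    rw [Finset.sum_fiberwise_of_maps_to]
    intro c _
    rw [mem_range]
    exact Nat.lt_succ_of_le (hK c)
  have h2 : ∀ v ∈ range (d + 1),
      ∑ c ∈ (range m).filter (fun c => K c = v), min (K c) (d - K c) =
      min v (d - v) * ((range m).filter fun c => K c = v).card := by
    intro v _
    have : ∀ c ∈ (range m).filter (fun c => K c = v),
        min (K c) (d - K c) = min v (d - v) := by
      intro c hc
      rw [mem_filter] at hc
      rw [hc.2]
    rw [Finset.sum_congr rfl this, Finset.sum_const, smul_eq_mul, mul_comm]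
  rw [h1, Finset.sum_congr rfl h2]
  rcases d with _ | d'
  · simp
  · rw [Finset.sum_range_succ', Finset.sum_range_succ]
    simp

lemma word_getD_le_s6 (n : ℕ) (β : ℕ → ℕ) (j : ℕ) : (word n β).getD j 0 ≤ n - 1 := by
  by_cases h : j < (word n β).length
  · rw [List.getD_eq_getElem _ _ h]
    have hm : (word n β)[j] ∈ word n β := List.getElem_mem _
    have : (word n β)[j] ∈ ((Finset.range n).sum fun i => Multiset.replicate (β i) i) :=
      (Multiset.mem_sort _).mp hm
    rw [Multiset.mem_sum] at this
    obtain ⟨i, hi, hmem⟩ := this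
    rw [Multiset.eq_of_mem_replicate hmem]
    have := mem_range.mp hi
    omega
  · rw [List.getD_eq_default _ _ (by omega)]
    omega

end Aux

open Finset in
/-- The earth mover's coefficient of compositions `α_1, …, α_d ∈ C(s,n)` equals the
unimodal symmetric difference of their Young diagrams. -/
theorem emc_eq_usd (s n d : ℕ) (α : ℕ → ℕ → ℕ)
    (hα : ∀ i, i < d → ∑ t ∈ Finset.range n, α i t = s) :
    emc s n d α = usd d fun i => diagram s n (α i) := by
  classical
  have hrow : ∀ j, cost d (fun i => ((word n (α i)).getD j 0 : ℤ)) =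
      ∑ k ∈ range (d - 1), min (k + 1) (d - (k + 1)) *
        ((range (n - 1)).filter
          fun c => Kc d (fun i => (word n (α i)).getD j 0) c = k + 1).card := by
    intro j
    rw [cost_eq d (n - 1) _ (fun i _ => word_getD_le_s6 n (α i) j)]
    exact sum_min_group d (n - 1) _ (fun c => Kc_le d _ c)
  unfold emc
  rw [Finset.sum_congr rfl (fun j _ => hrow j), Finset.sum_comm]
  unfold usd
  apply Finset.sum_congr rfl
  intro k hk
  rw [← Finset.mul_sum]
  congr 1
  have hgrid : (((range d).biUnion fun i => diagram s n (α i)).filter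
      (fun x => ((range d).filter fun i => x ∈ diagram s n (α i)).card = k + 1)) =
      ((range s ×ˢ range (n - 1)).filter
      (fun x => ((range d).filter fun i => x ∈ diagram s n (α i)).card = k + 1)) := by
    ext p
    simp only [mem_filter, mem_biUnion]
    constructor
    · rintro ⟨⟨i, hi, hpi⟩, hcard⟩
      exact ⟨(mem_filter.mp hpi).1, hcard⟩
    · rintro ⟨hp, hcard⟩
      have hne : ((range d).filter fun i => p ∈ diagram s n (α i)).Nonempty := by
        rw [← Finset.card_pos, hcard]; omega
      obtain ⟨i, hi⟩ := hne
      rw [mem_filter] at hi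
      exact ⟨⟨i, hi.1, hi.2⟩, hcard⟩
  rw [hgrid, Finset.card_filter, Finset.sum_product]
  apply Finset.sum_congr rfl
  intro j hj
  rw [Finset.card_filter]
  apply Finset.sum_congr rfl
  intro c hc
  have hfe : ((range d).filter fun i => c < (word n (α i)).getD j 0) =
      ((range d).filter fun i => (j, c) ∈ diagram s n (α i)) := by
    apply Finset.filter_congr
    intro i _
    simp only [diagram, mem_filter, Finset.mem_product, mem_range, eq_iff_iff]
    constructor
    · intro h
      exact ⟨⟨mem_range.mp hj, mem_range.mp hc⟩, h⟩
    · intro h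
      exact h.2
  simp only [Kc, hfe]
end

section
/- The number of plane partitions fitting in an x × y × 2 box equals ((x+1)(x+2)⋯(x+y) · (x+2)(x+3)⋯(x+y+1)) / (y!·(y+1)!). -/
/-- `IsPP x y z f`: `f` is a plane partition fitting in an `x × y × z` box, i.e. an
`x × y` array of entries in `{0,…,z}` (vanishing outside the grid), weakly decreasing
along rows and columns. -/
def IsPP (x y z : ℕ) (f : ℕ → ℕ → ℕ) : Prop :=
  (∀ i j, f i j ≤ z) ∧
  (∀ i j, (x ≤ i ∨ y ≤ j) → f i j = 0) ∧
  (∀ i i' j, i ≤ i' → f i' j ≤ f i j) ∧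
  (∀ i j j', j ≤ j' → f i j' ≤ f i j)

namespace PPaux

open Finset

def IsQ (x s t : ℕ) (p : (ℕ → ℕ) × (ℕ → ℕ)) : Prop :=
  (∀ i, p.1 (i+1) ≤ p.1 i) ∧ (∀ i, p.2 (i+1) ≤ p.2 i) ∧
  (∀ i, p.2 i ≤ p.1 i) ∧ p.1 0 ≤ s ∧ p.2 0 ≤ t ∧
  (∀ i, x ≤ i → p.1 i = 0) ∧ (∀ i, x ≤ i → p.2 i = 0)

lemma antitone_of_step {g : ℕ → ℕ} (h : ∀ i, g (i+1) ≤ g i) : ∀ {i j}, i ≤ j → g j ≤ g i := by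
  intro i j hij
  induction j with
  | zero => simp_all
  | succ j ih =>
    rcases Nat.lt_or_ge i (j+1) with h' | h'
    · exact le_trans (h j) (ih (Nat.lt_succ_iff.mp h'))
    · have : i = j + 1 := le_antisymm hij h'
      simp [this]

lemma bound1 {x s t p} (hp : IsQ x s t p) : ∀ i, p.1 i ≤ s :=
  fun i => le_trans (antitone_of_step hp.1 (Nat.zero_le i)) hp.2.2.2.1

lemma bound2 {x s t p} (hp : IsQ x s t p) : ∀ i, p.2 i ≤ t :=
  fun i => le_trans (antitone_of_step hp.2.1 (Nat.zero_le i)) hp.2.2.2.2.1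

instance finQ (x s t : ℕ) : Finite {p // IsQ x s t p} := by
  apply Finite.of_injective (β := (Fin x → Fin (s+1)) × (Fin x → Fin (t+1)))
    (fun p => (fun i => ⟨p.1.1 i, Nat.lt_succ_of_le (bound1 p.2 i)⟩,
               fun i => ⟨p.1.2 i, Nat.lt_succ_of_le (bound2 p.2 i)⟩))
  intro p q h
  obtain ⟨h1, h2⟩ := Prod.mk.injEq _ _ _ _ ▸ h
  apply Subtype.ext
  have e1 : ∀ i, p.1.1 i = q.1.1 i := by
    intro i
    rcases Nat.lt_or_ge i x with hi | hi
    · exact congrArg Fin.val (congrFun h1 ⟨i, hi⟩)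
    · rw [p.2.2.2.2.2.2.1 i hi, q.2.2.2.2.2.2.1 i hi]
  have e2 : ∀ i, p.1.2 i = q.1.2 i := by
    intro i
    rcases Nat.lt_or_ge i x with hi | hi
    · exact congrArg Fin.val (congrFun h2 ⟨i, hi⟩)
    · rw [p.2.2.2.2.2.2.2 i hi, q.2.2.2.2.2.2.2 i hi]
  exact Prod.ext (funext e1) (funext e2)

def cons (n : ℕ) (g : ℕ → ℕ) : ℕ → ℕ
  | 0 => n
  | i+1 => g i

def cnt : ℕ → ℕ → ℕ → ℕ
  | 0, _, _ => 1
  | x+1, s, t => ∑ u ∈ Finset.range (s+1), ∑ v ∈ Finset.range (min u t + 1), cnt x u v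

lemma card_zero (s t : ℕ) : Nat.card {p // IsQ 0 s t p} = 1 := by
  rw [Nat.card_eq_one_iff_unique]
  constructor
  · constructor
    intro p q
    apply Subtype.ext
    have h1 : ∀ i, p.1.1 i = 0 := fun i => p.2.2.2.2.2.2.1 i (Nat.zero_le i)
    have h2 : ∀ i, p.1.2 i = 0 := fun i => p.2.2.2.2.2.2.2 i (Nat.zero_le i)
    have g1 : ∀ i, q.1.1 i = 0 := fun i => q.2.2.2.2.2.2.1 i (Nat.zero_le i)
    have g2 : ∀ i, q.1.2 i = 0 := fun i => q.2.2.2.2.2.2.2 i (Nat.zero_le i)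
    exact Prod.ext (funext fun i => (h1 i).trans (g1 i).symm)
      (funext fun i => (h2 i).trans (g2 i).symm)
  · exact ⟨⟨(fun _ => 0, fun _ => 0), by
      refine ⟨fun i => le_rfl, fun i => le_rfl, fun i => le_rfl, ?_, ?_, fun i _ => rfl, fun i _ => rfl⟩ <;>
        exact Nat.zero_le _⟩⟩

def stepEquiv (x s t : ℕ) :
    {p // IsQ (x+1) s t p} ≃ Σ u : Fin (s+1), Σ v : Fin (min u.1 t + 1), {p // IsQ x u.1 v.1 p} where
  toFun p := ⟨⟨p.1.1 0, Nat.lt_succ_of_le p.2.2.2.2.1⟩,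
    ⟨p.1.2 0, Nat.lt_succ_of_le (le_min (p.2.2.2.1 0) p.2.2.2.2.2.1)⟩,
    ⟨(fun i => p.1.1 (i+1), fun i => p.1.2 (i+1)),
      ⟨fun i => p.2.1 (i+1), fun i => p.2.2.1 (i+1), fun i => p.2.2.2.1 (i+1),
       p.2.1 0, p.2.2.1 0,
       fun i hi => p.2.2.2.2.2.2.1 (i+1) (Nat.succ_le_succ hi),
       fun i hi => p.2.2.2.2.2.2.2 (i+1) (Nat.succ_le_succ hi)⟩⟩⟩
  invFun q := ⟨(cons q.1.1 q.2.2.1.1, cons q.2.1.1 q.2.2.1.2), by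
    obtain ⟨u, v, ⟨⟨a, b⟩, ha1, ha2, ha3, ha4, ha5, ha6, ha7⟩⟩ := q
    refine ⟨?_, ?_, ?_, ?_, ?_, ?_, ?_⟩
    · intro i; cases i with
      | zero => exact ha4
      | succ i => exact ha1 i
    · intro i; cases i with
      | zero => exact ha5
      | succ i => exact ha2 i
    · intro i; cases i with
      | zero => exact le_trans (Nat.lt_succ_iff.mp v.2) (Nat.min_le_left _ _)
      | succ i => exact ha3 i
    · exact Nat.lt_succ_iff.mp u.2
    · exact le_trans (Nat.lt_succ_iff.mp v.2) (Nat.min_le_right _ _)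
    · intro i hi; cases i with
      | zero => omega
      | succ i => exact ha6 i (by omega)
    · intro i hi; cases i with
      | zero => omega
      | succ i => exact ha7 i (by omega)⟩
  left_inv p := by
    apply Subtype.ext
    refine Prod.ext (funext fun i => ?_) (funext fun i => ?_) <;> cases i <;> rfl
  right_inv q := by
    obtain ⟨u, v, ⟨⟨a, b⟩, hq⟩⟩ := q
    rfl

lemma nat_card_sigma {ι : Type} [Fintype ι] (f : ι → Type) [∀ i, Finite (f i)] :
    Nat.card (Σ i, f i) = ∑ i, Nat.card (f i) := by
  classical
  letI : ∀ i, Fintype (f i) := fun i => Fintype.ofFinite _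
  simp [Nat.card_eq_fintype_card, Fintype.card_sigma]

lemma card_eq_cnt (x : ℕ) : ∀ s t, Nat.card {p // IsQ x s t p} = cnt x s t := by
  induction x with
  | zero => intro s t; rw [card_zero]; rfl
  | succ x ih =>
    intro s t
    rw [Nat.card_congr (stepEquiv x s t), nat_card_sigma, cnt]
    rw [← Fin.sum_univ_eq_sum_range
      (fun u => ∑ v ∈ Finset.range (min u t + 1), cnt x u v) (s+1)]
    refine Finset.sum_congr rfl fun u _ => ?_
    rw [nat_card_sigma]
    rw [← Fin.sum_univ_eq_sum_range (fun v => cnt x u.1 v) (min u.1 t + 1)]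
    exact Finset.sum_congr rfl fun v _ => ih u.1 v.1

def toPP (p : (ℕ → ℕ) × (ℕ → ℕ)) : ℕ → ℕ → ℕ :=
  fun i j => if j < p.2 i then 2 else if j < p.1 i then 1 else 0

lemma toPP_isPP {x y : ℕ} {p} (hp : IsQ x y y p) : IsPP x y 2 (toPP p) := by
  obtain ⟨h1, h2, h3, h4, h5, h6, h7⟩ := hp
  refine ⟨fun i j => ?_, fun i j hij => ?_, fun i i' j hii => ?_, fun i j j' hjj => ?_⟩
  · unfold toPP; split_ifs <;> omega
  · unfold toPP
    rcases hij with hij | hij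
    · rw [h6 i hij, h7 i hij]; simp
    · have := bound1 ⟨h1, h2, h3, h4, h5, h6, h7⟩ i
      have := bound2 ⟨h1, h2, h3, h4, h5, h6, h7⟩ i
      split_ifs <;> omega
  · have a1 := antitone_of_step h1 hii
    have a2 := antitone_of_step h2 hii
    unfold toPP; split_ifs <;> omega
  · unfold toPP; split_ifs <;> omega

lemma toPP_bij (x y : ℕ) :
    Function.Bijective (fun p : {p // IsQ x y y p} =>
      (⟨toPP p.1, toPP_isPP p.2⟩ : {f // IsPP x y 2 f})) := by
  constructor
  · rintro ⟨p, hp⟩ ⟨q, hq⟩ h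
    have h' : toPP p = toPP q := congrArg Subtype.val h
    apply Subtype.ext
    show p = q
    have key : ∀ (r : (ℕ → ℕ) × (ℕ → ℕ)), IsQ x y y r → ∀ i j,
        ((1 ≤ toPP r i j ↔ j < r.1 i) ∧ (2 ≤ toPP r i j ↔ j < r.2 i)) := by
      rintro r hr i j
      have hb := hr.2.2.1 i
      constructor <;> (unfold toPP; split_ifs <;> omega)
    refine Prod.ext (funext fun i => ?_) (funext fun i => ?_)
    · have k1 := fun j => (key p hp i j).1
      have k2 := fun j => (key q hq i j).1
      rw [h'] at k1
      have e : ∀ j, j < p.1 i ↔ j < q.1 i := fun j => (k1 j).symm.trans (k2 j)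
      have := e (p.1 i); have := e (q.1 i); omega
    · have k1 := fun j => (key p hp i j).2
      have k2 := fun j => (key q hq i j).2
      rw [h'] at k1
      have e : ∀ j, j < p.2 i ↔ j < q.2 i := fun j => (k1 j).symm.trans (k2 j)
      have := e (p.2 i); have := e (q.2 i); omega
  · rintro ⟨f, hf⟩
    obtain ⟨hb, hz, hrow, hcol⟩ := hf
    set a : ℕ → ℕ := fun i => sInf {n | f i n = 0} with ha
    set b : ℕ → ℕ := fun i => sInf {n | f i n ≤ 1} with hbdef
    have hane : ∀ i, ({n | f i n = 0} : Set ℕ).Nonempty := fun i => ⟨y, hz i y (Or.inr le_rfl)⟩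
    have hbne : ∀ i, ({n | f i n ≤ 1} : Set ℕ).Nonempty :=
      fun i => ⟨y, by simp [hz i y (Or.inr le_rfl)]⟩
    have hamem : ∀ i, f i (a i) = 0 := fun i => Nat.sInf_mem (hane i)
    have hbmem : ∀ i, f i (b i) ≤ 1 := fun i => Nat.sInf_mem (hbne i)
    have halt : ∀ i j, j < a i → f i j ≠ 0 := fun i j hj => by
      have := Nat.notMem_of_lt_sInf (s := {n | f i n = 0}) hj; simpa using this
    have hblt : ∀ i j, j < b i → ¬ f i j ≤ 1 := fun i j hj => by
      have := Nat.notMem_of_lt_sInf (s := {n | f i n ≤ 1}) hj; simpa using this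
    have hage : ∀ i j, a i ≤ j → f i j = 0 := fun i j hj =>
      Nat.le_zero.mp ((hamem i) ▸ hcol i _ _ hj)
    have hbge : ∀ i j, b i ≤ j → f i j ≤ 1 := fun i j hj => le_trans (hcol i _ _ hj) (hbmem i)
    have hQ : IsQ x y y (a, b) := by
      refine ⟨?_, ?_, ?_, ?_, ?_, ?_, ?_⟩
      · intro i
        exact Nat.sInf_le
          (by simpa using Nat.le_zero.mp ((hage i (a i) le_rfl) ▸ hrow i (i+1) _ (Nat.le_succ i)))
      · intro i; exact Nat.sInf_le (le_trans (hrow i (i+1) _ (Nat.le_succ i)) (hbmem i))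
      · intro i; exact Nat.sInf_le (by simp [hamem i])
      · exact Nat.sInf_le (hz 0 y (Or.inr le_rfl))
      · exact Nat.sInf_le (by simp [hz 0 y (Or.inr le_rfl)])
      · intro i hi; exact Nat.le_zero.mp (Nat.sInf_le (hz i 0 (Or.inl hi)))
      · intro i hi; exact Nat.le_zero.mp (Nat.sInf_le (by simp [hz i 0 (Or.inl hi)]))
    refine ⟨⟨(a, b), hQ⟩, ?_⟩
    apply Subtype.ext
    funext i j
    show toPP (a, b) i j = f i j
    unfold toPP
    simp only
    split_ifs with hb2 hb1
    · have := hblt i j hb2; have := hb i j; omega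
    · have := halt i j hb1; have := hbge i j (by omega); omega
    · exact (hage i j (by omega)).symm

lemma hockeyA (x m : ℕ) : ∑ v ∈ range (m+1), (x+v).choose x = (x+m+1).choose (x+1) := by
  induction m with
  | zero => simp
  | succ m ih =>
    have p := Nat.choose_succ_succ' (x+m+1) x
    rw [sum_range_succ]
    simp only [show x + (m+1) = x + m + 1 from rfl, show x + (m+1) + 1 = x + m + 1 + 1 from rfl,
      show x + 1 + 1 = x + 2 from rfl] at *
    omega

lemma hockeyB (x m : ℕ) : ∑ v ∈ range (m+1), (x+v).choose (x+1) = (x+m+1).choose (x+2) := by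
  induction m with
  | zero => simp [Nat.choose_eq_zero_of_lt]
  | succ m ih =>
    have p := Nat.choose_succ_succ' (x+m+1) (x+1)
    rw [sum_range_succ]
    simp only [show x + (m+1) = x + m + 1 from rfl, show x + (m+1) + 1 = x + m + 1 + 1 from rfl,
      show x + 1 + 1 = x + 2 from rfl] at *
    omega

lemma hockeyC (x m : ℕ) : ∑ u ∈ range (m+1), (x+u).choose (u+1) + 1 = (x+m+1).choose (m+1) := by
  induction m with
  | zero => simp
  | succ m ih =>
    have p := Nat.choose_succ_succ' (x+m+1) (m+1)
    rw [sum_range_succ]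
    simp only [show x + (m+1) = x + m + 1 from rfl, show x + (m+1) + 1 = x + m + 1 + 1 from rfl,
      show x + 1 + 1 = x + 2 from rfl] at *
    omega

lemma head (x t : ℕ) :
    ∑ u ∈ range (t+1), (((x+u).choose x : ℚ) * ((x+u+1).choose (x+1) : ℚ)
        - ((x+u).choose (u+1) : ℚ) * ((x+u+1).choose (x+2) : ℚ))
      = (((x+t+1).choose (x+1) : ℚ))^2
        - ((x+t+1).choose (t+1) : ℚ) * ((x+t+1).choose (x+2) : ℚ) := by
  induction t with
  | zero =>
    have h0 : (x+1).choose (x+2) = 0 := Nat.choose_eq_zero_of_lt (by omega)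
    simp [h0]
  | succ t ih =>
    rw [sum_range_succ, ih]
    simp only [show x+(t+1) = x+t+1 from rfl, show x+(t+1)+1 = x+t+2 from rfl,
      show t+1+1 = t+2 from rfl, show x+t+1+1 = x+t+2 from rfl]
    have p1 : (x+t+2).choose (x+1) = (x+t+1).choose x + (x+t+1).choose (x+1) :=
      Nat.choose_succ_succ' (x+t+1) x
    have p2 : (x+t+2).choose (x+2) = (x+t+1).choose (x+1) + (x+t+1).choose (x+2) :=
      Nat.choose_succ_succ' (x+t+1) (x+1)
    have p3 : (x+t+2).choose (t+2) = (x+t+1).choose (t+1) + (x+t+1).choose (t+2) :=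
      Nat.choose_succ_succ' (x+t+1) (t+1)
    have p4 : (x+t+1).choose (t+1) = (x+t+1).choose x := by
      rw [← Nat.choose_symm (show x ≤ x+t+1 by omega)]
      congr 1
      omega
    rw [p1, p2, p3, p4]
    push_cast
    ring

lemma cnt_eq (x : ℕ) : ∀ s t, t ≤ s → (cnt x s t : ℚ)
    = ((x+s).choose x : ℚ) * ((x+t).choose x : ℚ)
      - ((x+s).choose (s+1) : ℚ) * ((x+t).choose (x+1) : ℚ) := by
  induction x with
  | zero =>
    intro s t _
    have h1 : s.choose (s+1) = 0 := Nat.choose_eq_zero_of_lt (by omega)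
    simp [cnt, h1]
  | succ x ih =>
    intro s t hts
    rw [cnt]
    push_cast
    have inner : ∀ u, u ∈ range (s+1) →
        (∑ v ∈ range (min u t + 1), (cnt x u v : ℚ))
          = ((x+u).choose x : ℚ) * ((x+(min u t)+1).choose (x+1) : ℚ)
            - ((x+u).choose (u+1) : ℚ) * ((x+(min u t)+1).choose (x+2) : ℚ) := by
      intro u _
      have : ∀ v, v ∈ range (min u t + 1) → (cnt x u v : ℚ)
          = ((x+u).choose x : ℚ) * ((x+v).choose x : ℚ)
            - ((x+u).choose (u+1) : ℚ) * ((x+v).choose (x+1) : ℚ) := by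
        intro v hv
        rw [mem_range] at hv
        exact ih u v (by omega)
      rw [sum_congr rfl this, sum_sub_distrib, ← mul_sum, ← mul_sum]
      congr 2
      · exact_mod_cast hockeyA x (min u t)
      · exact_mod_cast hockeyB x (min u t)
    rw [sum_congr rfl inner]
    rw [← Finset.sum_range_add_sum_Ico _ (by omega : t+1 ≤ s+1)]
    have hhead : ∑ u ∈ range (t+1),
        (((x+u).choose x : ℚ) * ((x+(min u t)+1).choose (x+1) : ℚ)
          - ((x+u).choose (u+1) : ℚ) * ((x+(min u t)+1).choose (x+2) : ℚ))
        = (((x+t+1).choose (x+1) : ℚ))^2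
          - ((x+t+1).choose (t+1) : ℚ) * ((x+t+1).choose (x+2) : ℚ) := by
      rw [← head x t]
      refine sum_congr rfl fun u hu => ?_
      rw [mem_range] at hu
      have : min u t = u := by omega
      rw [this]
    have htail : ∑ u ∈ Ico (t+1) (s+1),
        (((x+u).choose x : ℚ) * ((x+(min u t)+1).choose (x+1) : ℚ)
          - ((x+u).choose (u+1) : ℚ) * ((x+(min u t)+1).choose (x+2) : ℚ))
        = (((x+s+1).choose (x+1) : ℚ) - ((x+t+1).choose (x+1) : ℚ)) * ((x+t+1).choose (x+1) : ℚ)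
          - (((x+s+1).choose (s+1) : ℚ) - ((x+t+1).choose (t+1) : ℚ))
              * ((x+t+1).choose (x+2) : ℚ) := by
      have : ∀ u ∈ Ico (t+1) (s+1),
          (((x+u).choose x : ℚ) * ((x+(min u t)+1).choose (x+1) : ℚ)
            - ((x+u).choose (u+1) : ℚ) * ((x+(min u t)+1).choose (x+2) : ℚ))
          = (((x+u).choose x : ℚ) * ((x+t+1).choose (x+1) : ℚ)
            - ((x+u).choose (u+1) : ℚ) * ((x+t+1).choose (x+2) : ℚ)) := by
        intro u hu
        rw [mem_Ico] at hu
        have : min u t = t := by omega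
        rw [this]
      rw [sum_congr rfl this, sum_sub_distrib]
      have e1 : ∑ u ∈ Ico (t+1) (s+1), ((x+u).choose x : ℚ) * ((x+t+1).choose (x+1) : ℚ)
          = (((x+s+1).choose (x+1) : ℚ) - ((x+t+1).choose (x+1) : ℚ))
              * ((x+t+1).choose (x+1) : ℚ) := by
        rw [← sum_mul]
        congr 1
        rw [Finset.sum_Ico_eq_sub _ (by omega : t+1 ≤ s+1)]
        have a1 : ∑ u ∈ range (s+1), ((x+u).choose x : ℚ) = ((x+s+1).choose (x+1) : ℚ) := by
          exact_mod_cast hockeyA x s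
        have a2 : ∑ u ∈ range (t+1), ((x+u).choose x : ℚ) = ((x+t+1).choose (x+1) : ℚ) := by
          exact_mod_cast hockeyA x t
        rw [a1, a2]
      have e2 : ∑ u ∈ Ico (t+1) (s+1), ((x+u).choose (u+1) : ℚ) * ((x+t+1).choose (x+2) : ℚ)
          = (((x+s+1).choose (s+1) : ℚ) - ((x+t+1).choose (t+1) : ℚ))
              * ((x+t+1).choose (x+2) : ℚ) := by
        rw [← sum_mul]
        congr 1
        rw [Finset.sum_Ico_eq_sub _ (by omega : t+1 ≤ s+1)]
        have a1 : ∑ u ∈ range (s+1), ((x+u).choose (u+1) : ℚ)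
            = ((x+s+1).choose (s+1) : ℚ) - 1 := by
          have h := hockeyC x s
          have h' : ((∑ u ∈ range (s+1), (x+u).choose (u+1) : ℕ) : ℚ) + 1
              = ((x+s+1).choose (s+1) : ℚ) := by
            exact_mod_cast congrArg (Nat.cast : ℕ → ℚ) h
          push_cast at h' ⊢
          linarith
        have a2 : ∑ u ∈ range (t+1), ((x+u).choose (u+1) : ℚ)
            = ((x+t+1).choose (t+1) : ℚ) - 1 := by
          have h := hockeyC x t
          have h' : ((∑ u ∈ range (t+1), (x+u).choose (u+1) : ℕ) : ℚ) + 1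
              = ((x+t+1).choose (t+1) : ℚ) := by
            exact_mod_cast congrArg (Nat.cast : ℕ → ℚ) h
          push_cast at h' ⊢
          linarith
        rw [a1, a2]
        ring
      rw [e1, e2]
    rw [hhead, htail]
    simp only [show x+1+s = x+s+1 from by omega, show x+1+t = x+t+1 from by omega,
      show x+1+1 = x+2 from rfl]
    ring

lemma prod_fact (x y : ℕ) :
    (∏ i ∈ range y, ((x:ℚ)+1+i)) * (x.factorial : ℚ) = ((x+y).factorial : ℚ) := by
  induction y with
  | zero => simp
  | succ y ih =>
    rw [prod_range_succ]
    have h : ((x+(y+1)).factorial : ℚ) = (((x+y)+1 : ℕ) : ℚ) * ((x+y).factorial : ℚ) := by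
      rw [show x+(y+1) = (x+y)+1 from rfl, Nat.factorial_succ]
      push_cast
      ring
    rw [h, ← ih]
    push_cast
    ring

lemma final (x y : ℕ) :
    ((x+y).choose x : ℚ) * ((x+y).choose x : ℚ)
      - ((x+y).choose (y+1) : ℚ) * ((x+y).choose (x+1) : ℚ)
    = (((x+y).factorial : ℚ) * ((x+y+1).factorial : ℚ))
        / ((x.factorial : ℚ) * ((x+1).factorial : ℚ) * (y.factorial : ℚ)
            * ((y+1).factorial : ℚ)) := by
  have fne : ∀ n : ℕ, ((n.factorial : ℚ)) ≠ 0 :=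
    fun n => Nat.cast_ne_zero.mpr (Nat.factorial_ne_zero n)
  rcases Nat.eq_zero_or_pos x with hx | hx
  · subst hx
    have h1 : y.choose (y+1) = 0 := Nat.choose_eq_zero_of_lt (by omega)
    simp only [zero_add, h1, Nat.choose_zero_right, Nat.factorial_zero, Nat.cast_one,
      Nat.cast_zero, Nat.cast_ofNat]
    field_simp
    simp [Nat.factorial]
  · rcases Nat.eq_zero_or_pos y with hy | hy
    · subst hy
      have h1 : x.choose (x+1) = 0 := Nat.choose_eq_zero_of_lt (by omega)
      simp only [add_zero, Nat.choose_self, h1]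
      push_cast
      field_simp
      simp [Nat.factorial]
    · obtain ⟨x', rfl⟩ : ∃ x', x = x'+1 := ⟨x-1, by omega⟩
      obtain ⟨y', rfl⟩ : ∃ y', y = y'+1 := ⟨y-1, by omega⟩
      set X := x'+1
      set Y := y'+1
      have c1 : ((X+Y).choose X : ℚ)
          = ((X+Y).factorial : ℚ) / ((X.factorial : ℚ) * (Y.factorial : ℚ)) := by
        rw [Nat.cast_choose ℚ (show X ≤ X+Y by omega), show X+Y-X = Y from by omega]
      have c2 : ((X+Y).choose (Y+1) : ℚ)
          = ((X+Y).factorial : ℚ) / (((Y+1).factorial : ℚ) * (x'.factorial : ℚ)) := by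
        rw [Nat.cast_choose ℚ (show Y+1 ≤ X+Y by omega), show X+Y-(Y+1) = x' from by omega]
      have c3 : ((X+Y).choose (X+1) : ℚ)
          = ((X+Y).factorial : ℚ) / (((X+1).factorial : ℚ) * (y'.factorial : ℚ)) := by
        rw [Nat.cast_choose ℚ (show X+1 ≤ X+Y by omega), show X+Y-(X+1) = y' from by omega]
      rw [c1, c2, c3]
      have f1 : ((X+Y+1).factorial : ℚ) = ((X+Y+1 : ℕ) : ℚ) * ((X+Y).factorial : ℚ) := by
        rw [Nat.factorial_succ]; push_cast; ring
      have f2 : ((X+1).factorial : ℚ) = ((X+1 : ℕ) : ℚ) * (X.factorial : ℚ) := by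
        rw [Nat.factorial_succ]; push_cast; ring
      have f3 : ((Y+1).factorial : ℚ) = ((Y+1 : ℕ) : ℚ) * (Y.factorial : ℚ) := by
        rw [Nat.factorial_succ]; push_cast; ring
      have f4 : (X.factorial : ℚ) = ((X : ℕ) : ℚ) * (x'.factorial : ℚ) := by
        rw [show X = x'+1 from rfl, Nat.factorial_succ]; push_cast; ring
      have f5 : (Y.factorial : ℚ) = ((Y : ℕ) : ℚ) * (y'.factorial : ℚ) := by
        rw [show Y = y'+1 from rfl, Nat.factorial_succ]; push_cast; ring
      rw [f1, f2, f3]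
      rw [f4, f5]
      have hX : ((X:ℕ):ℚ) ≠ 0 := by push_cast; positivity
      have hY : ((Y:ℕ):ℚ) ≠ 0 := by push_cast; positivity
      field_simp
      push_cast
      ring

end PPaux

/-- The number of plane partitions fitting in an `x × y × 2` box equals
`((x+1)⋯(x+y) · (x+2)⋯(x+y+1)) / (y!·(y+1)!)`. -/
theorem card_planePartitions_height_two (x y : ℕ) :
    (Nat.card {f : ℕ → ℕ → ℕ // IsPP x y 2 f} : ℚ)
      = (∏ i ∈ Finset.range y, ((x : ℚ) + 1 + i))
          * (∏ i ∈ Finset.range y, ((x : ℚ) + 2 + i))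
          / ((y.factorial : ℚ) * ((y + 1).factorial : ℚ)) := by
  classical
  open PPaux in
  have hcard : Nat.card {f : ℕ → ℕ → ℕ // IsPP x y 2 f} = PPaux.cnt x y y := by
    rw [← Nat.card_congr (Equiv.ofBijective _ (PPaux.toPP_bij x y))]
    exact PPaux.card_eq_cnt x y y
  rw [hcard, PPaux.cnt_eq x y y le_rfl, PPaux.final x y]
  have fne : ∀ n : ℕ, ((n.factorial : ℚ)) ≠ 0 :=
    fun n => Nat.cast_ne_zero.mpr (Nat.factorial_ne_zero n)
  have P1 : (∏ i ∈ Finset.range y, ((x : ℚ) + 1 + i))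
      = ((x+y).factorial : ℚ) / (x.factorial : ℚ) := by
    rw [eq_div_iff (fne x)]
    exact PPaux.prod_fact x y
  have P2 : (∏ i ∈ Finset.range y, ((x : ℚ) + 2 + i))
      = ((x+y+1).factorial : ℚ) / ((x+1).factorial : ℚ) := by
    rw [eq_div_iff (fne (x+1))]
    have e : (∏ i ∈ Finset.range y, ((x : ℚ) + 2 + i))
        = ∏ i ∈ Finset.range y, (((x+1 : ℕ) : ℚ) + 1 + i) := by
      refine Finset.prod_congr rfl fun i _ => ?_
      push_cast
      ring
    rw [e, show x+y+1 = (x+1)+y from by omega]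
    exact PPaux.prod_fact (x+1) y
  rw [P1, P2]
  field_simp
end
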